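/- Let α > 0 and λ ≥ 0. Then for every t > 0, the function t ↦ E_{α,1}(−λ t^α) is differentiable at t and d/dt [E_{α,1}(−λ t^α)] = t^{−1} E_{α,0}(−λ t^α), where E_{α,0}(z) = ∑_{k=1}^∞ z^k/Γ(kα). -/

import Mathlib

open Real Filter Set Topology


lemma summable_half_pow_div (N : ℕ) (hN : 0 < N) :
    Summable (fun m : ℕ => ((1:ℝ)/2) ^ (m / N)) := by
  haveI : NeZero N := ⟨hN.ne'⟩
  rw [← (Nat.divModEquiv N).symm.summable_iff]
  have heq : ((fun m : ℕ => ((1:ℝ)/2) ^ (m / N)) ∘ (Nat.divModEquiv N).symm)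
      = fun p : ℕ × Fin N => ((1:ℝ)/2) ^ p.1 := by
    funext p
    simp only [Function.comp_apply, Nat.divModEquiv_symm_apply]
    congr 1
    rw [mul_comm, Nat.mul_add_div hN, Nat.div_eq_of_lt p.2.is_lt, add_zero]
  rw [heq]
  have h2 : (∀ p : ℕ × Fin N, (0:ℝ) ≤ ((1:ℝ)/2) ^ p.1) := fun p => by positivity
  rw [summable_prod_of_nonneg h2]
  constructor
  · intro x; exact .of_finite
  · have : (fun x : ℕ => ∑' _ : Fin N, ((1:ℝ)/2) ^ x)
        = fun x : ℕ => (N : ℝ) * ((1:ℝ)/2) ^ x := by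
      funext x; rw [tsum_const]; simp [nsmul_eq_mul]
    rw [this]
    exact (summable_geometric_of_lt_one (by norm_num) (by norm_num)).mul_left _

lemma summable_pow_div_Gamma {α β A : ℝ} (hα : 0 < α) (hβ : 0 < β) (hA : 0 ≤ A) :
    Summable (fun k : ℕ => A ^ k / Real.Gamma (α * k + β)) := by
  set u : ℕ → ℝ := fun k => A ^ k / Real.Gamma (α * k + β) with hu
  have hpos : ∀ k : ℕ, 0 < α * k + β := fun k => by positivity
  have hGpos : ∀ k : ℕ, 0 < Real.Gamma (α * k + β) :=
    fun k => Real.Gamma_pos_of_pos (hpos k)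
  have hunn : ∀ k, 0 ≤ u k := fun k => by
    have := (hGpos k).le; positivity
  -- choose step N with 1 ≤ N * α
  set N : ℕ := ⌈1 / α⌉₊ + 1 with hN
  have hNpos : 0 < N := Nat.succ_pos _
  have hNα : 1 ≤ α * N := by
    have h1 : (1:ℝ) / α ≤ N := by
      have := Nat.le_ceil (1 / α)
      push_cast [hN]; linarith
    calc (1:ℝ) = (1/α) * α := by field_simp
    _ ≤ N * α := by apply mul_le_mul_of_nonneg_right h1 hα.le
    _ = α * N := mul_comm _ _
  -- choose K with α*K + β ≥ 2*A^N + 2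
  set K : ℕ := ⌈(2 * A ^ N + 2) / α⌉₊ with hK
  have hKge : ∀ k : ℕ, K ≤ k → 2 * A ^ N + 2 ≤ α * k + β := by
    intro k hk
    have h1 : (2 * A ^ N + 2) / α ≤ K := Nat.le_ceil _
    have h2 : (K : ℝ) ≤ k := by exact_mod_cast hk
    have : (2 * A ^ N + 2) / α * α ≤ (k : ℝ) * α :=
      mul_le_mul_of_nonneg_right (h1.trans h2) hα.le
    rw [div_mul_cancel₀ _ hα.ne'] at this
    nlinarith [hβ]
  -- key step inequality
  have hstep : ∀ k : ℕ, K ≤ k → u (k + N) ≤ u k * (1 / 2) := by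
    intro k hk
    have hge := hKge k hk
    have hx : (2:ℝ) ≤ α * k + β + 1 := by nlinarith [pow_nonneg hA N]
    have hmono := Real.Gamma_strictMonoOn_Ici.monotoneOn
    have hle : α * k + β + 1 ≤ α * ((k : ℝ) + N) + β := by nlinarith [hNα]
    have hG1 : Real.Gamma (α * k + β + 1) ≤ Real.Gamma (α * ((k : ℝ) + N) + β) :=
      hmono (Set.mem_Ici.mpr hx) (Set.mem_Ici.mpr (hx.trans hle)) hle
    have hG2 : Real.Gamma (α * k + β + 1) = (α * k + β) * Real.Gamma (α * k + β) :=
      Real.Gamma_add_one (hpos k).ne'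
    have hGnpos : 0 < (α * k + β) * Real.Gamma (α * k + β) :=
      mul_pos (hpos k) (hGpos k)
    have h1 : u (k + N) ≤ A ^ (k + N) / ((α * k + β) * Real.Gamma (α * k + β)) := by
      show A ^ (k + N) / Real.Gamma (α * ((k : ℕ) + N : ℕ) + β) ≤ _
      rw [Nat.cast_add]
      apply div_le_div_of_nonneg_left (pow_nonneg hA _) hGnpos
      rw [← hG2]; exact hG1
    have h2 : A ^ (k + N) / ((α * k + β) * Real.Gamma (α * k + β))
        = (A ^ N / (α * k + β)) * u k := by
      rw [hu, pow_add, div_mul_div_comm, mul_comm (A ^ k) (A ^ N)]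
    have h3 : A ^ N / (α * k + β) ≤ 1 / 2 := by
      rw [div_le_div_iff₀ (hpos k) (by norm_num)]
      nlinarith
    calc u (k + N) ≤ (A ^ N / (α * k + β)) * u k := by rw [← h2]; exact h1
      _ ≤ (1 / 2) * u k := mul_le_mul_of_nonneg_right h3 (hunn k)
      _ = u k * (1 / 2) := mul_comm _ _
  -- iterate
  have hiter : ∀ q r : ℕ, u (K + r + N * q) ≤ u (K + r) * ((1:ℝ) / 2) ^ q := by
    intro q
    induction q with
    | zero => intro r; simp
    | succ q ih =>
      intro r
      have h1 : K + r + N * (q + 1) = (K + r + N * q) + N := by ring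
      rw [h1]
      calc u ((K + r + N * q) + N) ≤ u (K + r + N * q) * (1/2) :=
            hstep _ (by omega)
        _ ≤ (u (K + r) * ((1:ℝ)/2) ^ q) * (1/2) := by
            apply mul_le_mul_of_nonneg_right (ih r); norm_num
        _ = u (K + r) * ((1:ℝ)/2) ^ (q + 1) := by ring
  set C : ℝ := ∑ i ∈ Finset.range N, u (K + i) with hC
  have hbound : ∀ m : ℕ, u (m + K) ≤ C * ((1:ℝ)/2) ^ (m / N) := by
    intro m
    have hm : m + K = K + (m % N) + N * (m / N) := by
      have := Nat.mod_add_div m N; omega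
    rw [hm]
    calc u (K + m % N + N * (m / N)) ≤ u (K + m % N) * ((1:ℝ)/2) ^ (m / N) :=
          hiter _ _
      _ ≤ C * ((1:ℝ)/2) ^ (m / N) := by
          apply mul_le_mul_of_nonneg_right _ (by positivity)
          exact Finset.single_le_sum (fun i _ => hunn (K + i))
            (Finset.mem_range.mpr (Nat.mod_lt _ hNpos))
  have hsum : Summable (fun m : ℕ => u (m + K)) := by
    apply Summable.of_nonneg_of_le (fun m => hunn _) hbound
    exact (summable_half_pow_div N hNpos).mul_left C
  exact (summable_nat_add_iff K).mp hsum

/-- The two-parameter Mittag-Leffler function (real arguments)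
`E_{α,β}(z) = ∑_{k=0}^∞ z^k/Γ(αk+β)`. -/
noncomputable def mlReal (α β z : ℝ) : ℝ :=
  ∑' k : ℕ, z ^ k / Real.Gamma (α * k + β)

/-- `E_{α,0}(z) = ∑_{k=1}^∞ z^k/Γ(kα)`. -/
noncomputable def mlZero (α z : ℝ) : ℝ :=
  ∑' k : ℕ, z ^ (k + 1) / Real.Gamma (((k : ℝ) + 1) * α)

/-- For `α > 0`, `λ ≥ 0` and `t > 0`,
`d/dt [E_{α,1}(-λ t^α)] = t⁻¹ E_{α,0}(-λ t^α)`. -/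
theorem hasDerivAt_mittagLeffler (α lam : ℝ) (hα : 0 < α) (hlam : 0 ≤ lam)
    (t : ℝ) (ht : 0 < t) :
    HasDerivAt (fun s : ℝ => mlReal α 1 (-lam * s ^ α))
      (t⁻¹ * mlZero α (-lam * t ^ α)) t := by
  set S : Set ℝ := Ioo (t / 2) (3 * t / 2) with hS
  have htS : t ∈ S := ⟨by linarith, by linarith⟩
  set g : ℕ → ℝ → ℝ := fun k s => (-lam) ^ k * s ^ (α * k) / Real.Gamma (α * k + 1)
    with hg
  set g' : ℕ → ℝ → ℝ :=
    fun k s => (-lam) ^ k * (α * k * s ^ (α * k - 1)) / Real.Gamma (α * k + 1) with hg'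
  set A : ℝ := lam * (3 * t / 2) ^ α with hA
  have hAnn : 0 ≤ A := by
    have : (0:ℝ) ≤ (3 * t / 2) ^ α := rpow_nonneg (by linarith) _
    positivity
  set u : ℕ → ℝ := fun k => 2 / t * (A ^ k * (α * k) / Real.Gamma (α * k + 1)) with hu
  have hGpos : ∀ k : ℕ, 0 < Real.Gamma (α * k + 1) := by
    intro k
    apply Real.Gamma_pos_of_pos
    positivity
  -- derivatives of each term on S
  have hderiv : ∀ (k : ℕ) (y : ℝ), y ∈ S → HasDerivAt (g k) (g' k y) y := by
    intro k y hy
    have hy0 : y ≠ 0 := by have := hy.1; exact (show (0:ℝ) < y by linarith).ne'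
    exact (((Real.hasDerivAt_rpow_const (Or.inl hy0)).const_mul ((-lam) ^ k)).div_const _)
  -- bound on derivatives on S
  have hbound : ∀ (k : ℕ) (y : ℝ), y ∈ S → ‖g' k y‖ ≤ u k := by
    intro k y hy
    obtain ⟨hy1, hy2⟩ := hy
    have hy0 : 0 < y := by linarith
    have h1 : ‖g' k y‖ = lam ^ k * (α * k * y ^ (α * k - 1)) / Real.Gamma (α * k + 1) := by
      rw [hg', norm_eq_abs, abs_div, abs_of_pos (hGpos k), abs_mul, abs_pow, abs_neg,
        abs_of_nonneg hlam, abs_of_nonneg (by positivity : (0:ℝ) ≤ α * k * y ^ (α * k - 1))]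
    rw [h1]
    have h2 : y ^ (α * k - 1) ≤ (3 * t / 2) ^ (α * (k:ℝ)) * (2 / t) := by
      rw [Real.rpow_sub hy0, Real.rpow_one, div_eq_mul_inv]
      apply mul_le_mul (Real.rpow_le_rpow hy0.le hy2.le (by positivity))
        (by rw [inv_eq_one_div, div_le_div_iff₀ hy0 ht]; linarith)
        (by positivity) (by positivity)
    have hAk : A ^ k = lam ^ k * (3 * t / 2) ^ (α * (k:ℝ)) := by
      rw [hA, mul_pow, ← Real.rpow_natCast ((3 * t / 2) ^ α) k,
        ← Real.rpow_mul (by linarith : (0:ℝ) ≤ 3 * t / 2)]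
    calc lam ^ k * (α * k * y ^ (α * k - 1)) / Real.Gamma (α * k + 1)
        ≤ lam ^ k * (α * k * ((3 * t / 2) ^ (α * (k:ℝ)) * (2 / t))) /
            Real.Gamma (α * k + 1) := by gcongr
      _ = u k := by
          show _ = 2 / t * (A ^ k * (α * k) / Real.Gamma (α * k + 1))
          rw [hAk]; ring
  -- summability of the bound
  have husum : Summable u := by
    rw [hu]
    apply Summable.mul_left
    rw [← summable_nat_add_iff 1]
    have hform : ∀ k : ℕ,
        A ^ (k + 1) * (α * ((k + 1 : ℕ) : ℝ)) / Real.Gamma (α * ((k + 1 : ℕ) : ℝ) + 1)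
          = A * (A ^ k / Real.Gamma (α * k + α)) := by
      intro k
      push_cast
      rw [show α * ((k:ℝ) + 1) = α * k + α by ring]
      rw [Real.Gamma_add_one (by positivity : (0:ℝ) < α * k + α).ne']
      have hΓ : Real.Gamma (α * k + α) ≠ 0 := (Real.Gamma_pos_of_pos (by positivity)).ne'
      have hc : (0:ℝ) < α * k + α := by positivity
      field_simp
      ring
    exact ((summable_pow_div_Gamma hα hα hAnn).mul_left A).congr fun k => (hform k).symm
  -- summability of the series at t
  have hg0sum : Summable (fun k => g k t) := by
    set B : ℝ := lam * t ^ α with hB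
    have hBnn : 0 ≤ B := mul_nonneg hlam (rpow_nonneg ht.le _)
    apply Summable.of_norm
    have hnorm : ∀ k : ℕ, ‖g k t‖ = B ^ k / Real.Gamma (α * k + 1) := by
      intro k
      rw [hg, norm_eq_abs, abs_div, abs_of_pos (hGpos k), abs_mul, abs_pow, abs_neg,
        abs_of_nonneg hlam, abs_of_nonneg (rpow_nonneg ht.le _), hB, mul_pow,
        ← Real.rpow_natCast (t ^ α) k, ← Real.rpow_mul ht.le]
    exact ((summable_pow_div_Gamma hα one_pos hBnn).congr fun k => (hnorm k).symm)
  -- termwise differentiation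
  have hmain : HasDerivAt (fun y => ∑' k, g k y) (∑' k, g' k t) t :=
    hasDerivAt_tsum_of_isPreconnected husum isOpen_Ioo isPreconnected_Ioo
      hderiv hbound htS hg0sum htS
  -- the function agrees with mlReal near t
  have heq : (fun s : ℝ => mlReal α 1 (-lam * s ^ α)) =ᶠ[𝓝 t] fun y => ∑' k, g k y := by
    filter_upwards [eventually_gt_nhds ht] with s hs
    rw [mlReal]
    apply tsum_congr
    intro k
    rw [hg]
    congr 1
    rw [mul_pow, ← Real.rpow_natCast (s ^ α) k, ← Real.rpow_mul hs.le]
  -- identify the sum of derivatives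
  have hg'sum : Summable (fun k => g' k t) :=
    Summable.of_norm_bounded husum fun k => hbound k t htS
  have hval : ∑' k, g' k t = t⁻¹ * mlZero α (-lam * t ^ α) := by
    rw [Summable.tsum_eq_zero_add hg'sum]
    have h0 : g' 0 t = 0 := by simp [hg']
    rw [h0, zero_add, mlZero, ← tsum_mul_left]
    apply tsum_congr
    intro k
    have hc : (0:ℝ) < α * ((k:ℝ) + 1) := by positivity
    rw [hg']
    push_cast
    rw [Real.Gamma_add_one hc.ne', Real.rpow_sub ht, Real.rpow_one]
    have hpow : (-lam * t ^ α) ^ (k + 1) = (-lam) ^ (k + 1) * t ^ (α * ((k:ℝ) + 1)) := by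
      rw [mul_pow, ← Real.rpow_natCast (t ^ α) (k + 1), ← Real.rpow_mul ht.le]
      push_cast
      ring_nf
    rw [hpow, show ((k:ℝ) + 1) * α = α * ((k:ℝ) + 1) by ring]
    have hΓ : Real.Gamma (α * ((k:ℝ) + 1)) ≠ 0 := (Real.Gamma_pos_of_pos hc).ne'
    field_simp
  exact HasDerivAt.congr_of_eventuallyEq (hval ▸ hmain) heq
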